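/- One has Π_E ∘ Π_{E₀} ∘ Π_E = Π_E and Π_{E₀} ∘ Π_E ∘ Π_{E₀} = Π_{E₀}. Consequently the restriction of Π_{E₀} to E := ker d₀⁻¹ ∩ ker(d₀⁻¹ ∘ d) and the restriction of Π_E to E₀ := ker d₀ ∩ (range d₀)ᗮ are mutually inverse linear bijections between E and E₀. -/

import Mathlib

/-- `Π_E ∘ Π_{E₀} ∘ Π_E = Π_E` and `Π_{E₀} ∘ Π_E ∘ Π_{E₀} = Π_{E₀}`;
consequently `Π_{E₀}` restricted to `E` and `Π_E` restricted to `E₀` are mutually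
inverse bijections between `E` and `E₀`. -/
theorem PiE_PiE0_mutually_inverse_on_E_and_E0
    {V : Type*} [NormedAddCommGroup V] [InnerProductSpace ℝ V] [FiniteDimensional ℝ V]
    (d₀ dinv : V →ₗ[ℝ] V) (hd₀ : d₀ ∘ₗ d₀ = 0)
    (hpinv₁ : (LinearMap.range d₀)ᗮ ≤ LinearMap.ker dinv)
    (hpinv₂ : LinearMap.range dinv ≤ (LinearMap.ker d₀)ᗮ)
    (hpinv₃ : ∀ v : V, d₀ (dinv v) = (Submodule.orthogonalProjection (LinearMap.range d₀) v : V))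
    (d : V →ₗ[ℝ] V) (hd : d ∘ₗ d = 0)
    (D : V →ₗ[ℝ] V) (hD : D = dinv ∘ₗ (d - d₀))
    (N : ℕ) (hDnil : D ^ (N + 1) = 0)
    (P : V →ₗ[ℝ] V) (hP : P = ∑ k ∈ Finset.range (N + 1), ((-1 : ℝ)) ^ k • D ^ k)
    (Q : V →ₗ[ℝ] V) (hQ : Q = P ∘ₗ dinv)
    (PiE : V →ₗ[ℝ] V) (hPiE : PiE = LinearMap.id - Q ∘ₗ d - d ∘ₗ Q)
    (E E₀ : Submodule ℝ V)
    (hE : E = LinearMap.ker dinv ⊓ LinearMap.ker (dinv ∘ₗ d))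
    (hE₀ : E₀ = LinearMap.ker d₀ ⊓ (LinearMap.range d₀)ᗮ)
    (PiE0 : V →ₗ[ℝ] V) (hPiE0 : PiE0 = LinearMap.id - dinv ∘ₗ d₀ - d₀ ∘ₗ dinv) :
    PiE ∘ₗ PiE0 ∘ₗ PiE = PiE ∧
    PiE0 ∘ₗ PiE ∘ₗ PiE0 = PiE0 ∧
    (∀ x ∈ E, PiE0 x ∈ E₀) ∧
    (∀ x ∈ E₀, PiE x ∈ E) ∧
    (∀ x ∈ E, PiE (PiE0 x) = x) ∧
    (∀ x ∈ E₀, PiE0 (PiE x) = x) := by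
  -- move to the multiplicative (ring) language
  have hd₀m : d₀ * d₀ = 0 := by rw [Module.End.mul_eq_comp]; exact hd₀
  have hdm : d * d = 0 := by rw [Module.End.mul_eq_comp]; exact hd
  have hDm : D = dinv * (d - d₀) := by rw [Module.End.mul_eq_comp]; exact hD
  have hQm : Q = P * dinv := by rw [Module.End.mul_eq_comp]; exact hQ
  have hPiEm : PiE = 1 - Q * d - d * Q := by
    rw [hPiE]; rw [Module.End.mul_eq_comp, Module.End.mul_eq_comp]; rfl
  have hPiE0m : PiE0 = 1 - dinv * d₀ - d₀ * dinv := by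
    rw [hPiE0]; rw [Module.End.mul_eq_comp, Module.End.mul_eq_comp]; rfl
  -- basic submodule facts
  have hrk : LinearMap.range d₀ ≤ LinearMap.ker d₀ := by
    rintro _ ⟨v, rfl⟩
    exact LinearMap.ext_iff.mp hd₀ v
  have hkd : (LinearMap.ker d₀)ᗮ ≤ LinearMap.ker dinv :=
    (Submodule.orthogonal_le hrk).trans hpinv₁
  have horth : LinearMap.range dinv ≤ (LinearMap.range d₀)ᗮ :=
    hpinv₂.trans (Submodule.orthogonal_le hrk)
  -- partial inverse identities
  have r3 : dinv * dinv = 0 := by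
    ext v
    exact hkd (hpinv₂ ⟨v, rfl⟩)
  have r4 : d₀ * dinv * d₀ = d₀ := by
    ext v
    simp only [Module.End.mul_apply]
    rw [hpinv₃]
    exact Submodule.starProjection_eq_self_iff.mpr ⟨v, rfl⟩
  have r5 : dinv * d₀ * dinv = dinv := by
    ext v
    simp only [Module.End.mul_apply]
    rw [hpinv₃]
    have h0 : dinv (v - (Submodule.orthogonalProjection (LinearMap.range d₀) v : V)) = 0 :=
      hpinv₁ (Submodule.sub_starProjection_mem_orthogonal v)
    rw [map_sub] at h0
    exact (sub_eq_zero.mp h0).symm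
  -- geometric series facts
  have hk : ∀ (A : V →ₗ[ℝ] V) (k : ℕ), ((-1 : ℝ)) ^ k • A ^ k = (-A) ^ k := by
    intro A k
    induction k with
    | zero => simp
    | succ n ih =>
      rw [pow_succ, pow_succ, pow_succ, mul_neg_one, neg_smul, ← ih,
        smul_mul_assoc, mul_neg, smul_neg]
  have hPsum : P = ∑ k ∈ Finset.range (N + 1), (-D) ^ k := by
    rw [hP]; exact Finset.sum_congr rfl fun k _ => hk D k
  have hnilneg : (-D) ^ (N + 1) = 0 := by
    rw [← hk, hDnil, smul_zero]
  have hP1 : P * (1 + D) = 1 := by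
    have hg := geom_sum_mul (-D) (N + 1)
    rw [← hPsum, hnilneg] at hg
    have : P * (1 + D) = -(P * (-D - 1)) := by noncomm_ring
    rw [this, hg]; noncomm_ring
  have hcomm : Commute D P := by
    rw [hPsum]
    exact Commute.sum_right _ _ _ fun k _ => ((Commute.refl D).neg_right).pow_right k
  have h1P : (1 + D) * P = 1 := by
    rw [((Commute.one_left P).add_left hcomm).eq, hP1]
  have hDP : D * P = 1 - P := by
    have h : D * P = (1 + D) * P - P := by noncomm_ring
    rw [h, h1P]
  have hPD : P * D = 1 - P := by
    have h : P * D = P * (1 + D) - P := by noncomm_ring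
    rw [h, hP1]
  -- factor Q through dinv on the left
  set D' : V →ₗ[ℝ] V := (d - d₀) * dinv with hD'
  have hDdinv : D * dinv = dinv * D' := by rw [hDm, mul_assoc]
  have r7 : ∀ k : ℕ, D ^ k * dinv = dinv * D' ^ k := by
    intro k
    induction k with
    | zero => simp
    | succ n ih =>
      rw [pow_succ, mul_assoc, hDdinv, ← mul_assoc, ih, mul_assoc, ← pow_succ]
  set P' : V →ₗ[ℝ] V := ∑ k ∈ Finset.range (N + 1), (-D') ^ k with hP'
  have r8 : Q = dinv * P' := by
    rw [hQm, hPsum, hP', Finset.sum_mul, Finset.mul_sum]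
    refine Finset.sum_congr rfl fun k _ => ?_
    rw [← hk D k, ← hk D' k, smul_mul_assoc, mul_smul_comm, r7 k]
  have r9 : dinv * Q = 0 := by
    rw [r8, ← mul_assoc, r3, zero_mul]
  have r10 : dinv * d₀ * Q = Q := by
    rw [r8, ← mul_assoc, r5, ← r8]
  have r16 : Q * dinv = 0 := by
    rw [hQm, mul_assoc, r3, mul_zero]
  have r12 : dinv * d = D + dinv * d₀ := by
    rw [hDm]; noncomm_ring
  have hDQ : D * Q = dinv - Q := by
    rw [hQm, ← mul_assoc, hDP, sub_mul, one_mul, ← hQm]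
  have r13 : dinv * d * Q = dinv := by
    rw [r12, add_mul, hDQ, r10, sub_add_cancel]
  have r17 : Q * d * dinv = dinv := by
    have h1 : Q * d * dinv = P * (dinv * d) * dinv := by rw [hQm]; noncomm_ring
    rw [h1, r12]
    have h2 : P * (D + dinv * d₀) * dinv = P * D * dinv + P * (dinv * d₀ * dinv) := by
      noncomm_ring
    rw [h2, hPD, r5, sub_mul, one_mul, ← hQm, sub_add_cancel]
  -- main operator identities
  have r14 : dinv * PiE = 0 := by
    rw [hPiEm, mul_sub, mul_sub, mul_one, ← mul_assoc, r9, zero_mul, sub_zero,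
      ← mul_assoc, r13, sub_self]
  have r15 : dinv * d * PiE = 0 := by
    rw [hPiEm, mul_sub, mul_sub, mul_one]
    have h1 : dinv * d * (Q * d) = (dinv * d * Q) * d := by noncomm_ring
    have h2 : dinv * d * (d * Q) = dinv * (d * d) * Q := by noncomm_ring
    rw [h1, h2, r13, hdm, mul_zero, zero_mul, sub_zero, sub_self]
  have r18 : PiE * dinv = 0 := by
    rw [hPiEm, sub_mul, sub_mul, one_mul, r17, mul_assoc, r16, mul_zero, sub_zero, sub_self]
  have r20 : PiE0 * Q = 0 := by
    rw [hPiE0m, sub_mul, sub_mul, one_mul, r10, mul_assoc, r9, mul_zero, sub_zero, sub_self]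
  have r21 : d₀ * PiE0 = 0 := by
    rw [hPiE0m, mul_sub, mul_sub, mul_one, ← mul_assoc, r4, ← mul_assoc, hd₀m,
      zero_mul, sub_zero, sub_self]
  -- pointwise consequences
  have memE : ∀ v, PiE v ∈ E := by
    intro v
    rw [hE, Submodule.mem_inf]
    refine ⟨LinearMap.mem_ker.mpr ?_, LinearMap.mem_ker.mpr ?_⟩
    · simpa [Module.End.mul_apply] using LinearMap.ext_iff.mp r14 v
    · simpa [Module.End.mul_apply, LinearMap.comp_apply] using LinearMap.ext_iff.mp r15 v
  have memE0 : ∀ v, PiE0 v ∈ E₀ := by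
    intro v
    rw [hE₀, Submodule.mem_inf]
    constructor
    · exact LinearMap.mem_ker.mpr
        (by simpa [Module.End.mul_apply] using LinearMap.ext_iff.mp r21 v)
    · have h1 : PiE0 v
          = (v - (Submodule.orthogonalProjection (LinearMap.range d₀) v : V)) - dinv (d₀ v) := by
        rw [hPiE0]
        simp only [LinearMap.sub_apply, LinearMap.id_apply, LinearMap.comp_apply]
        rw [hpinv₃]
        abel
      rw [h1]
      exact Submodule.sub_mem _ (Submodule.sub_starProjection_mem_orthogonal v)
        (horth ⟨d₀ v, rfl⟩)
  have hEid : ∀ x, dinv x = 0 → dinv (d x) = 0 → PiE x = x := by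
    intro x h1 h2
    rw [hPiE, hQ]
    simp [LinearMap.sub_apply, LinearMap.comp_apply, h1, h2]
  have hG5 : ∀ x ∈ E, PiE (PiE0 x) = x := by
    intro x hx
    rw [hE, Submodule.mem_inf] at hx
    have h1 : dinv x = 0 := hx.1
    have h2 : dinv (d x) = 0 := by
      simpa [LinearMap.comp_apply] using hx.2
    have hP0 : PiE0 x = x - dinv (d₀ x) := by
      simp [hPiE0, LinearMap.sub_apply, LinearMap.comp_apply, h1]
    rw [hP0, map_sub, hEid x h1 h2]
    have h3 : PiE (dinv (d₀ x)) = 0 := by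
      simpa [Module.End.mul_apply] using LinearMap.ext_iff.mp r18 (d₀ x)
    rw [h3, sub_zero]
  have hG6 : ∀ x ∈ E₀, PiE0 (PiE x) = x := by
    intro x hx
    rw [hE₀, Submodule.mem_inf] at hx
    have h1 : d₀ x = 0 := hx.1
    have h2 : dinv x = 0 := hpinv₁ hx.2
    have hPx : PiE x = x - Q (d x) := by
      rw [hPiE]
      simp [LinearMap.sub_apply, LinearMap.comp_apply, hQ, h2]
    rw [hPx, map_sub]
    have hq : PiE0 (Q (d x)) = 0 := by
      simpa [Module.End.mul_apply] using LinearMap.ext_iff.mp r20 (d x)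
    have hp0x : PiE0 x = x := by
      simp [hPiE0, LinearMap.sub_apply, LinearMap.comp_apply, h1, h2]
    rw [hq, hp0x, sub_zero]
  refine ⟨?_, ?_, fun x _ => memE0 x, fun x _ => memE x, hG5, hG6⟩
  · ext v
    simp only [LinearMap.comp_apply]
    exact hG5 _ (memE v)
  · ext v
    simp only [LinearMap.comp_apply]
    exact hG6 _ (memE0 v)
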